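/- Let S be a finite type, let γ ∈ (0,1), let ε ∈ [0,1], let ρ₀ : S → ℝ be a probability mass function, and let (K_m)_{m≥1} and (K'_m)_{m≥1} be sequences of row-stochastic kernels S → S → ℝ such that for every m ≥ 1 and every s ∈ S, D_TV(K_m s, K'_m s) ≤ 1 − ε. Let ρ_m = ρ₀ K_1 ⋯ K_m and ρ'_m = ρ₀ K'_1 ⋯ K'_m (with ρ_0 = ρ'_0 = ρ₀), and define the discounted marginal distributions μ s = (1 − γ) ∑_{m=0}^∞ γ^m · ρ_m s and μ' s = (1 − γ) ∑_{m=0}^∞ γ^m · ρ'_m s. Then D_TV(μ, μ') ≤ (γ / (1 − γ)) · (1 − ε). -/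

import Mathlib

/-- Total variation distance between two probability mass functions on a finite type:
`D_TV(p, q) = (1/2) ∑_s |p s - q s|`. -/
noncomputable def dTV {S : Type*} [Fintype S] (p q : S → ℝ) : ℝ :=
  (1 / 2) * ∑ s, |p s - q s|

/-- if two Markov chains start from the same initial distribution `ρ₀`
and at every step `m ≥ 1` the row-stochastic kernels `K_m` and `K'_m` are within
total variation `1 - ε` at every state, then the discounted marginal state
distributions `μ s = (1-γ) ∑_{m≥0} γ^m ρ_m s` and `μ' s = (1-γ) ∑_{m≥0} γ^m ρ'_m s`
satisfy `D_TV(μ, μ') ≤ γ/(1-γ) · (1-ε)`. -/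
theorem dTV_discounted_marginals_le
    {S : Type*} [Fintype S]
    (γ ε : ℝ) (hγ : γ ∈ Set.Ioo (0 : ℝ) 1) (hε : ε ∈ Set.Icc (0 : ℝ) 1)
    (ρ₀ : S → ℝ) (hρ₀0 : ∀ s, 0 ≤ ρ₀ s) (hρ₀1 : ∑ s, ρ₀ s = 1)
    (K K' : ℕ → S → S → ℝ)
    (hK0 : ∀ m : ℕ, 1 ≤ m → ∀ s t, 0 ≤ K m s t)
    (hK1 : ∀ m : ℕ, 1 ≤ m → ∀ s, ∑ t, K m s t = 1)
    (hK'0 : ∀ m : ℕ, 1 ≤ m → ∀ s t, 0 ≤ K' m s t)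
    (hK'1 : ∀ m : ℕ, 1 ≤ m → ∀ s, ∑ t, K' m s t = 1)
    (hTV : ∀ m : ℕ, 1 ≤ m → ∀ s, dTV (K m s) (K' m s) ≤ 1 - ε)
    (ρ ρ' : ℕ → S → ℝ)
    (hρ0 : ρ 0 = ρ₀) (hρ'0 : ρ' 0 = ρ₀)
    (hρ : ∀ m : ℕ, ∀ t, ρ (m + 1) t = ∑ s, ρ m s * K (m + 1) s t)
    (hρ' : ∀ m : ℕ, ∀ t, ρ' (m + 1) t = ∑ s, ρ' m s * K' (m + 1) s t) :
    dTV (fun s => (1 - γ) * ∑' m : ℕ, γ ^ m * ρ m s)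
        (fun s => (1 - γ) * ∑' m : ℕ, γ ^ m * ρ' m s) ≤
      γ / (1 - γ) * (1 - ε) := by
  obtain ⟨hγ0, hγ1⟩ := hγ
  obtain ⟨hε0, hε1⟩ := hε
  have h1γ : 0 < 1 - γ := by linarith
  have h1ε : 0 ≤ 1 - ε := by linarith
  -- ρ m and ρ' m are probability mass functions
  have hρP : ∀ m, (∀ s, 0 ≤ ρ m s) ∧ (∑ s, ρ m s = 1) := by
    intro m; induction m with
    | zero => rw [hρ0]; exact ⟨hρ₀0, hρ₀1⟩
    | succ m ih =>
      refine ⟨fun t => ?_, ?_⟩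
      · rw [hρ m t]
        exact Finset.sum_nonneg fun s _ =>
          mul_nonneg (ih.1 s) (hK0 (m + 1) (by omega) s t)
      · simp only [hρ m]
        rw [Finset.sum_comm]
        have : ∀ s, ∑ t, ρ m s * K (m + 1) s t = ρ m s := by
          intro s; rw [← Finset.mul_sum, hK1 (m + 1) (by omega) s, mul_one]
        simp only [this]; exact ih.2
  have hρ'P : ∀ m, (∀ s, 0 ≤ ρ' m s) ∧ (∑ s, ρ' m s = 1) := by
    intro m; induction m with
    | zero => rw [hρ'0]; exact ⟨hρ₀0, hρ₀1⟩
    | succ m ih =>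
      refine ⟨fun t => ?_, ?_⟩
      · rw [hρ' m t]
        exact Finset.sum_nonneg fun s _ =>
          mul_nonneg (ih.1 s) (hK'0 (m + 1) (by omega) s t)
      · simp only [hρ' m]
        rw [Finset.sum_comm]
        have : ∀ s, ∑ t, ρ' m s * K' (m + 1) s t = ρ' m s := by
          intro s; rw [← Finset.mul_sum, hK'1 (m + 1) (by omega) s, mul_one]
        simp only [this]; exact ih.2
  -- dTV between the marginals grows by at most (1-ε) per step
  have hd : ∀ m, dTV (ρ m) (ρ' m) ≤ m * (1 - ε) := by
    intro m; induction m with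
    | zero =>
      simp [dTV, hρ0, hρ'0]
    | succ m ih =>
      have key : ∀ t, |ρ (m + 1) t - ρ' (m + 1) t| ≤
          ∑ s, |ρ m s - ρ' m s| * K (m + 1) s t
            + ∑ s, ρ' m s * |K (m + 1) s t - K' (m + 1) s t| := by
        intro t
        have e : ρ (m + 1) t - ρ' (m + 1) t =
            ∑ s, ((ρ m s - ρ' m s) * K (m + 1) s t
              + ρ' m s * (K (m + 1) s t - K' (m + 1) s t)) := by
          rw [hρ m t, hρ' m t, ← Finset.sum_sub_distrib]
          exact Finset.sum_congr rfl fun s _ => by ring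
        rw [e, ← Finset.sum_add_distrib]
        refine (Finset.abs_sum_le_sum_abs _ _).trans
          (Finset.sum_le_sum fun s _ => ?_)
        refine (abs_add_le _ _).trans ?_
        rw [abs_mul, abs_mul, abs_of_nonneg (hK0 (m + 1) (by omega) s t),
          abs_of_nonneg ((hρ'P m).1 s)]
      have hsum : ∑ t, |ρ (m + 1) t - ρ' (m + 1) t| ≤
          (∑ s, |ρ m s - ρ' m s|) + ∑ s, ρ' m s * (2 * (1 - ε)) := by
        calc ∑ t, |ρ (m + 1) t - ρ' (m + 1) t|
            ≤ ∑ t, (∑ s, |ρ m s - ρ' m s| * K (m + 1) s t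
                + ∑ s, ρ' m s * |K (m + 1) s t - K' (m + 1) s t|) :=
              Finset.sum_le_sum fun t _ => key t
          _ = (∑ s, |ρ m s - ρ' m s| * ∑ t, K (m + 1) s t)
                + ∑ s, ρ' m s * ∑ t, |K (m + 1) s t - K' (m + 1) s t| := by
              rw [Finset.sum_add_distrib, Finset.sum_comm, Finset.sum_comm (f := fun t s => ρ' m s * |K (m + 1) s t - K' (m + 1) s t|)]
              simp [Finset.mul_sum]
          _ ≤ (∑ s, |ρ m s - ρ' m s|) + ∑ s, ρ' m s * (2 * (1 - ε)) := by
              gcongr with s _ s _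
              · rw [hK1 (m + 1) (by omega) s, mul_one]
              · exact (hρ'P m).1 s
              · have := hTV (m + 1) (by omega) s
                unfold dTV at this; linarith
      have : dTV (ρ (m + 1)) (ρ' (m + 1)) ≤ dTV (ρ m) (ρ' m) + (1 - ε) := by
        unfold dTV
        have h2 : ∑ s, ρ' m s * (2 * (1 - ε)) = 2 * (1 - ε) := by
          rw [← Finset.sum_mul, (hρ'P m).2, one_mul]
        rw [h2] at hsum
        linarith
      calc dTV (ρ (m + 1)) (ρ' (m + 1)) ≤ dTV (ρ m) (ρ' m) + (1 - ε) := this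
        _ ≤ m * (1 - ε) + (1 - ε) := by linarith
        _ = (m + 1 : ℕ) * (1 - ε) := by push_cast; ring
  -- summability facts
  have hγabs : |γ| < 1 := by rw [abs_of_pos hγ0]; exact hγ1
  have hgeo : Summable fun m : ℕ => γ ^ m := summable_geometric_of_lt_one hγ0.le hγ1
  have hbound : ∀ m s, |ρ m s| ≤ 1 := by
    intro m s
    rw [abs_of_nonneg ((hρP m).1 s)]
    calc ρ m s ≤ ∑ t, ρ m t := Finset.single_le_sum (fun t _ => (hρP m).1 t) (Finset.mem_univ s)
      _ = 1 := (hρP m).2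
  have hbound' : ∀ m s, |ρ' m s| ≤ 1 := by
    intro m s
    rw [abs_of_nonneg ((hρ'P m).1 s)]
    calc ρ' m s ≤ ∑ t, ρ' m t := Finset.single_le_sum (fun t _ => (hρ'P m).1 t) (Finset.mem_univ s)
      _ = 1 := (hρ'P m).2
  have habs : ∀ s, Summable fun m : ℕ => γ ^ m * |ρ m s - ρ' m s| := by
    intro s
    refine Summable.of_nonneg_of_le (fun m => by positivity)
      (fun m => ?_) (hgeo.mul_left 2)
    have : |ρ m s - ρ' m s| ≤ 2 := by
      calc |ρ m s - ρ' m s| ≤ |ρ m s| + |ρ' m s| := abs_sub _ _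
        _ ≤ 2 := by linarith [hbound m s, hbound' m s]
    calc γ ^ m * |ρ m s - ρ' m s| ≤ γ ^ m * 2 := by
          exact mul_le_mul_of_nonneg_left this (by positivity)
      _ = 2 * γ ^ m := by ring
  have hs1 : ∀ s, Summable fun m : ℕ => γ ^ m * ρ m s := by
    intro s
    refine Summable.of_norm ?_
    refine Summable.of_nonneg_of_le (fun m => norm_nonneg _) (fun m => ?_) hgeo
    rw [Real.norm_eq_abs, abs_mul, abs_pow, abs_of_pos hγ0]
    calc γ ^ m * |ρ m s| ≤ γ ^ m * 1 := by
          exact mul_le_mul_of_nonneg_left (hbound m s) (by positivity)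
      _ = γ ^ m := by ring
  have hs2 : ∀ s, Summable fun m : ℕ => γ ^ m * ρ' m s := by
    intro s
    refine Summable.of_norm ?_
    refine Summable.of_nonneg_of_le (fun m => norm_nonneg _) (fun m => ?_) hgeo
    rw [Real.norm_eq_abs, abs_mul, abs_pow, abs_of_pos hγ0]
    calc γ ^ m * |ρ' m s| ≤ γ ^ m * 1 := by
          exact mul_le_mul_of_nonneg_left (hbound' m s) (by positivity)
      _ = γ ^ m := by ring
  -- main chain
  unfold dTV
  have step1 : ∀ s : S,
      |(1 - γ) * ∑' m : ℕ, γ ^ m * ρ m s - (1 - γ) * ∑' m : ℕ, γ ^ m * ρ' m s|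
        ≤ (1 - γ) * ∑' m : ℕ, γ ^ m * |ρ m s - ρ' m s| := by
    intro s
    rw [← mul_sub, abs_mul, abs_of_pos h1γ]
    gcongr
    rw [← Summable.tsum_sub (hs1 s) (hs2 s)]
    have hsumm : Summable fun m : ℕ => ‖γ ^ m * ρ m s - γ ^ m * ρ' m s‖ := by
      convert habs s using 2 with m
      rw [Real.norm_eq_abs, ← mul_sub, abs_mul, abs_pow, abs_of_pos hγ0]
    rw [← Real.norm_eq_abs]
    refine (norm_tsum_le_tsum_norm hsumm).trans_eq (tsum_congr fun m => ?_)
    rw [Real.norm_eq_abs, ← mul_sub, abs_mul, abs_pow, abs_of_pos hγ0]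
  have step2 :
      ∑ s, ((1 - γ) * ∑' m : ℕ, γ ^ m * |ρ m s - ρ' m s|)
        = (1 - γ) * ∑' m : ℕ, γ ^ m * ∑ s, |ρ m s - ρ' m s| := by
    rw [← Finset.mul_sum]
    congr 1
    rw [← Summable.tsum_finsetSum (fun s _ => habs s)]
    congr 1; ext m
    rw [Finset.mul_sum]
  have hS2 : Summable fun m : ℕ => γ ^ m * ∑ s, |ρ m s - ρ' m s| := by
    have := summable_sum (s := (Finset.univ : Finset S)) (fun s _ => habs s)
    convert this using 1
    ext m; rw [Finset.mul_sum]
  have hS3 : Summable fun m : ℕ => γ ^ m * (2 * (m * (1 - ε))) := by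
    have h := summable_pow_mul_geometric_of_norm_lt_one (R := ℝ) 1 hγabs
    have := (h.mul_left (2 * (1 - ε)))
    convert this using 1
    ext m; ring
    ext m; ring
  have step3 : (∑' m : ℕ, γ ^ m * ∑ s, |ρ m s - ρ' m s|)
      ≤ ∑' m : ℕ, γ ^ m * (2 * (m * (1 - ε))) := by
    refine Summable.tsum_le_tsum (fun m => ?_) hS2 hS3
    have := hd m
    unfold dTV at this
    have h2 : ∑ s, |ρ m s - ρ' m s| ≤ 2 * (m * (1 - ε)) := by linarith
    exact mul_le_mul_of_nonneg_left h2 (by positivity)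
  have step4 : (∑' m : ℕ, γ ^ m * (2 * (m * (1 - ε))))
      = 2 * (1 - ε) * (γ / (1 - γ) ^ 2) := by
    have h := tsum_coe_mul_geometric_of_norm_lt_one (𝕜 := ℝ) hγabs
    calc (∑' m : ℕ, γ ^ m * (2 * (m * (1 - ε))))
        = ∑' m : ℕ, 2 * (1 - ε) * ((m : ℝ) * γ ^ m) := by
          congr 1; ext m; ring
      _ = 2 * (1 - ε) * ∑' m : ℕ, (m : ℝ) * γ ^ m := by rw [tsum_mul_left]
      _ = 2 * (1 - ε) * (γ / (1 - γ) ^ 2) := by rw [h]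
  calc (1 / 2 : ℝ) * ∑ s, |(1 - γ) * ∑' m : ℕ, γ ^ m * ρ m s
          - (1 - γ) * ∑' m : ℕ, γ ^ m * ρ' m s|
      ≤ (1 / 2) * ∑ s, ((1 - γ) * ∑' m : ℕ, γ ^ m * |ρ m s - ρ' m s|) := by
        gcongr with s _
        exact step1 s
    _ = (1 / 2) * ((1 - γ) * ∑' m : ℕ, γ ^ m * ∑ s, |ρ m s - ρ' m s|) := by rw [step2]
    _ ≤ (1 / 2) * ((1 - γ) * ∑' m : ℕ, γ ^ m * (2 * (m * (1 - ε)))) :=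
        mul_le_mul_of_nonneg_left
          (mul_le_mul_of_nonneg_left step3 h1γ.le) (by norm_num)
    _ = (1 / 2) * ((1 - γ) * (2 * (1 - ε) * (γ / (1 - γ) ^ 2))) := by rw [step4]
    _ = γ / (1 - γ) * (1 - ε) := by
        field_simp
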